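/- Let Z be a Hilbert space, M : dom(M) ⊆ Z → Z dissipative with μI − M bijective for μ > 0, and N ∈ L(Z) skew-symmetric. Define the Peaceman-Rachford error propagation: for fixed points z solving (M+N)z = g and iterates z^{i+1} = F(z^i) (F as in the Peaceman-Rachford iteration), set Δf^i = (μI − M)(z − z^i). Then ‖Δf^{i+1}‖² − ‖Δf^i‖² ≤ 4μ Re⟨z − z^i, M(z − z^i)⟩ ≤ 0; in particular, the sequence (‖Δf^i‖)_i is monotonically decreasing and hence convergent. -/

import Mathlib

open Filter

/-- The residual `Δfⁱ = (μI − M)(z − zⁱ)` of the Peaceman–Rachford iteration. -/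
noncomputable def deltaF {Z : Type*} [NormedAddCommGroup Z] [InnerProductSpace ℂ Z]
    {dom : Submodule ℂ Z} (M : dom →ₗ[ℂ] Z) (μ : ℝ) (z : dom) (zseq : ℕ → dom)
    (i : ℕ) : Z :=
  (μ : ℂ) • ((z - zseq i : dom) : Z) - M (z - zseq i)

/-- Peaceman–Rachford error decay: if `M` is dissipative with `μI − M` bijective,
`N` is bounded skew-symmetric, `z` solves `(M+N)z = g`, and `zⁱ⁺¹ = F(zⁱ)` is the
Peaceman–Rachford iteration, then with `Δfⁱ = (μI − M)(z − zⁱ)` one has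
`‖Δfⁱ⁺¹‖² − ‖Δfⁱ‖² ≤ 4μ Re⟨z − zⁱ, M(z − zⁱ)⟩ ≤ 0`; in particular `(‖Δfⁱ‖)ᵢ` is
monotonically decreasing and convergent. -/
theorem stmt6 {Z : Type*} [NormedAddCommGroup Z] [InnerProductSpace ℂ Z]
    [CompleteSpace Z]
    (dom : Submodule ℂ Z) (M : dom →ₗ[ℂ] Z) (N : Z →L[ℂ] Z) (g : Z)
    (μ : ℝ) (hμ : 0 < μ)
    (hdiss : ∀ x : dom, (inner ℂ ((x : Z)) (M x) : ℂ).re ≤ 0)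
    (hskew : ∀ x y : Z, (inner ℂ (N x) y : ℂ) = -(inner ℂ x (N y) : ℂ))
    (Minv : Z → dom)
    (hMinv : ∀ y : Z, (μ : ℂ) • ((Minv y : dom) : Z) - M (Minv y) = y)
    (hMinv' : ∀ x : dom, Minv ((μ : ℂ) • (x : Z) - M x) = x)
    (Ninv : Z → Z)
    (hNinv : ∀ y : Z, (μ : ℂ) • (Ninv y) - N (Ninv y) = y)
    (hNinv' : ∀ x : Z, Ninv ((μ : ℂ) • x - N x) = x)
    (z : dom) (hz : M z + N z = g)
    (zseq : ℕ → dom)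
    (hiter : ∀ i : ℕ, zseq (i + 1) =
      Minv (((μ : ℂ) • Ninv ((μ : ℂ) • ((zseq i : dom) : Z) + M (zseq i))
            + N (Ninv ((μ : ℂ) • ((zseq i : dom) : Z) + M (zseq i))))
          - (((μ : ℂ) • Ninv g + N (Ninv g)) + g))) :
    (∀ i : ℕ,
        ‖deltaF M μ z zseq (i + 1)‖ ^ 2 - ‖deltaF M μ z zseq i‖ ^ 2 ≤
          4 * μ * (inner ℂ (((z - zseq i : dom) : Z)) (M (z - zseq i)) : ℂ).re ∧
        4 * μ * (inner ℂ (((z - zseq i : dom) : Z)) (M (z - zseq i)) : ℂ).re ≤ 0) ∧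
      Antitone (fun i => ‖deltaF M μ z zseq i‖) ∧
      ∃ l : ℝ, Tendsto (fun i => ‖deltaF M μ z zseq i‖) atTop (nhds l) := by
  -- Re ⟨x, N x⟩ = 0
  have hre : ∀ x : Z, (inner ℂ x (N x) : ℂ).re = 0 := by
    intro x
    have h1 := hskew x x
    have h2 : starRingEnd ℂ (inner ℂ x (N x) : ℂ) = -(inner ℂ x (N x) : ℂ) := by
      rw [inner_conj_symm, h1]
    have h3 := congrArg Complex.re h2
    simp only [Complex.conj_re, Complex.neg_re] at h3
    linarith
  -- norm equality
  have hnormeq : ∀ x : Z, ‖(μ : ℂ) • x + N x‖ ^ 2 = ‖(μ : ℂ) • x - N x‖ ^ 2 := by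
    intro x
    have hsm : (μ : ℝ) • x = (μ : ℂ) • x := by simp
    have hr : (inner ℂ ((μ : ℝ) • x) (N x) : ℂ).re = 0 := by
      rw [hsm, inner_smul_left]
      simp [Complex.conj_ofReal, hre x]
    rw [@norm_add_sq ℂ, @norm_sub_sq ℂ]
    simp only [RCLike.re_to_complex] at *
    rw [hsm] at hr
    linarith
  have diff : ∀ c d : Z, ‖c + d‖ ^ 2 - ‖c - d‖ ^ 2 = 4 * (inner ℂ c d : ℂ).re := by
    intro c d
    rw [@norm_add_sq ℂ, @norm_sub_sq ℂ]
    simp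
    ring
  have key : ∀ i : ℕ,
      ‖deltaF M μ z zseq (i + 1)‖ ^ 2 - ‖deltaF M μ z zseq i‖ ^ 2 =
        4 * μ * (inner ℂ (((z - zseq i : dom) : Z)) (M (z - zseq i)) : ℂ).re := by
    intro i
    set a : Z := Ninv ((μ : ℂ) • ((zseq i : dom) : Z) + M (zseq i)) with hadef
    set b : Z := Ninv g with hbdef
    have ha : (μ : ℂ) • a - N a = (μ : ℂ) • ((zseq i : dom) : Z) + M (zseq i) := hNinv _
    have hb : (μ : ℂ) • b - N b = g := hNinv _
    have e1 : N a = (μ : ℂ) • a - ((μ : ℂ) • ((zseq i : dom) : Z) + M (zseq i)) := by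
      rw [← ha]; abel
    have e2 : N b = (μ : ℂ) • b - g := by rw [← hb]; abel
    have e3 : N z = g - M z := by rw [← hz]; abel
    set x : Z := b - a + z with hx
    have h1 : (μ : ℂ) • x - N x = (μ : ℂ) • ((z - zseq i : dom) : Z) + M (z - zseq i) := by
      simp only [hx, map_sub, map_add, smul_sub, smul_add, Submodule.coe_sub, e1, e2, e3]
      abel
    have hA : (μ : ℂ) • ((zseq (i + 1) : dom) : Z) - M (zseq (i + 1)) =
        (((μ : ℂ) • a + N a) - (((μ : ℂ) • b + N b) + g)) := by
      rw [hiter i]; exact hMinv _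
    have e4 : M (zseq (i + 1)) = (μ : ℂ) • ((zseq (i + 1) : dom) : Z) -
        (((μ : ℂ) • a + N a) - (((μ : ℂ) • b + N b) + g)) := by
      rw [← hA]; abel
    have h2 : deltaF M μ z zseq (i + 1) = (μ : ℂ) • x + N x := by
      show (μ : ℂ) • ((z - zseq (i + 1) : dom) : Z) - M (z - zseq (i + 1)) = _
      simp only [hx, map_sub, map_add, smul_sub, smul_add, Submodule.coe_sub, e4, e1, e2, e3]
      abel
    have h3 : ‖deltaF M μ z zseq (i + 1)‖ ^ 2 =
        ‖(μ : ℂ) • ((z - zseq i : dom) : Z) + M (z - zseq i)‖ ^ 2 := by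
      rw [h2, hnormeq x, h1]
    have h4 : deltaF M μ z zseq i =
        (μ : ℂ) • ((z - zseq i : dom) : Z) - M (z - zseq i) := rfl
    rw [h3, h4, diff]
    rw [inner_smul_left]
    simp [Complex.conj_ofReal]
    simp only [inner_sub_left, inner_sub_right, Complex.sub_re]
    ring
  have hineq : ∀ i : ℕ,
      ‖deltaF M μ z zseq (i + 1)‖ ^ 2 - ‖deltaF M μ z zseq i‖ ^ 2 ≤
        4 * μ * (inner ℂ (((z - zseq i : dom) : Z)) (M (z - zseq i)) : ℂ).re ∧
      4 * μ * (inner ℂ (((z - zseq i : dom) : Z)) (M (z - zseq i)) : ℂ).re ≤ 0 := by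
    intro i
    constructor
    · exact le_of_eq (key i)
    · have := hdiss (z - zseq i)
      nlinarith
  have hanti : Antitone (fun i => ‖deltaF M μ z zseq i‖) := by
    apply antitone_nat_of_succ_le
    intro i
    have h := hineq i
    have hsq : ‖deltaF M μ z zseq (i + 1)‖ ^ 2 ≤ ‖deltaF M μ z zseq i‖ ^ 2 := by
      linarith [h.1, h.2]
    have h0 := norm_nonneg (deltaF M μ z zseq (i + 1))
    have h0' := norm_nonneg (deltaF M μ z zseq i)
    nlinarith
  refine ⟨hineq, hanti, ?_⟩
  exact ⟨_, tendsto_atTop_ciInf hanti ⟨0, by rintro y ⟨i, rfl⟩; exact norm_nonneg _⟩⟩
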